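/- For all real numbers x with 0 < x < 1 and all real y ≥ 0, the series ∑_{n=0}^{∞} xⁿ · γ(n+1/2, y)/Γ(n+1/2) converges absolutely and equals (erf(√y) − √x · e^{−y} · e^{xy} · erf(√(xy))) / (1 − x). -/

import Mathlib

open MeasureTheory Real Set Filter Topology

/-- The lower incomplete gamma function `γ(x, y) = ∫_0^y t^(x-1) e^(-t) dt`. -/
noncomputable def lowerGamma (x y : ℝ) : ℝ :=
  ∫ t in (0 : ℝ)..y, t ^ (x - 1) * Real.exp (-t)

/-- The error function `erf(x) = (2/√π) ∫_0^x e^(-t²) dt`. -/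
noncomputable def erf (x : ℝ) : ℝ :=
  (2 / Real.sqrt Real.pi) * ∫ t in (0 : ℝ)..x, Real.exp (-t ^ 2)

lemma lowerGamma_nonneg {s y : ℝ} (hy : 0 ≤ y) : 0 ≤ lowerGamma s y := by
  apply intervalIntegral.integral_nonneg hy
  intro t ht
  exact mul_nonneg (Real.rpow_nonneg ht.1 _) (Real.exp_pos _).le

lemma lowerGamma_le_Gamma {s y : ℝ} (hs : 0 < s) (hy : 0 ≤ y) :
    lowerGamma s y ≤ Real.Gamma s := by
  rw [Real.Gamma_eq_integral hs, lowerGamma, intervalIntegral.integral_of_le hy]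
  have h : ∀ t : ℝ, t ^ (s-1) * Real.exp (-t) = Real.exp (-t) * t ^ (s-1) :=
    fun t => mul_comm _ _
  simp_rw [h]
  apply setIntegral_mono_set (Real.GammaIntegral_convergent hs)
  · refine ae_restrict_of_forall_mem measurableSet_Ioi (fun t ht => ?_)
    have : (0:ℝ) < t := ht
    positivity
  · exact HasSubset.Subset.eventuallyLE Ioc_subset_Ioi_self

lemma lowerGamma_ofReal (s : ℝ) {y : ℝ} (hy : 0 ≤ y) :
    (lowerGamma s y : ℂ) = Complex.partialGamma (s : ℂ) y := by
  rw [lowerGamma, Complex.partialGamma, ← intervalIntegral.integral_ofReal,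
      intervalIntegral.integral_of_le hy, intervalIntegral.integral_of_le hy]
  refine setIntegral_congr_fun measurableSet_Ioc (fun t ht => ?_)
  simp only [Complex.ofReal_mul, Complex.ofReal_exp, Complex.ofReal_neg]
  rw [Complex.ofReal_cpow ht.1.le]
  push_cast
  ring

lemma lowerGamma_succ {s : ℝ} (hs : 0 < s) {y : ℝ} (hy : 0 ≤ y) :
    lowerGamma (s + 1) y = s * lowerGamma s y - y ^ s * Real.exp (-y) := by
  have h := Complex.partialGamma_add_one (s := (s : ℂ)) (by simpa using hs) hy
  have h2 : ((lowerGamma (s + 1) y : ℝ) : ℂ)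
      = ((s * lowerGamma s y - y ^ s * Real.exp (-y) : ℝ) : ℂ) := by
    rw [lowerGamma_ofReal (s + 1) hy]
    push_cast
    rw [h, ← lowerGamma_ofReal s hy]
    rw [← Complex.ofReal_cpow hy]
    push_cast
    ring
  exact_mod_cast h2

lemma Gamma_nat_half (n : ℕ) :
    Real.Gamma ((n : ℝ) + 1 / 2)
      = Real.sqrt Real.pi * (2 * n).factorial / (4 ^ n * n.factorial) := by
  induction n with
  | zero =>
    rw [show ((0:ℕ):ℝ) + 1 / 2 = 1 / 2 by norm_num, Real.Gamma_one_half_eq]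
    simp
  | succ n ih =>
    have h : ((n + 1 : ℕ) : ℝ) + 1 / 2 = ((n : ℝ) + 1 / 2) + 1 := by push_cast; ring
    rw [h, Real.Gamma_add_one (by positivity), ih]
    have h2 : 2 * (n + 1) = (2 * n + 1) + 1 := by ring
    rw [h2, Nat.factorial_succ, Nat.factorial_succ, Nat.factorial_succ]
    have hn : ((n.factorial : ℝ)) ≠ 0 := Nat.cast_ne_zero.mpr n.factorial_ne_zero
    push_cast
    have h4 : (4 : ℝ) ^ n ≠ 0 := by positivity
    field_simp
    ring

noncomputable def dc (n : ℕ) : ℝ := 4 ^ n * n.factorial / (2 * n + 1).factorial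

lemma dc_pos (n : ℕ) : 0 < dc n := by
  have h1 : (0:ℝ) < n.factorial := by exact_mod_cast n.factorial_pos
  have h2 : (0:ℝ) < (2 * n + 1).factorial := by exact_mod_cast (2 * n + 1).factorial_pos
  have : (0:ℝ) < 4 ^ n := by positivity
  unfold dc; positivity

lemma dc_zero : dc 0 = 1 := by simp [dc]

lemma dc_rec (n : ℕ) : dc (n + 1) * (2 * (n : ℝ) + 3) = 2 * dc n := by
  unfold dc
  have h : 2 * (n + 1) + 1 = (2 * n + 1) + 1 + 1 := by ring
  rw [h, Nat.factorial_succ, Nat.factorial_succ, Nat.factorial_succ, pow_succ]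
  have h1 : ((2 * n + 1).factorial : ℝ) ≠ 0 := Nat.cast_ne_zero.mpr (Nat.factorial_ne_zero _)
  have h2 : ((n.factorial : ℝ)) ≠ 0 := Nat.cast_ne_zero.mpr n.factorial_ne_zero
  push_cast
  field_simp
  ring

lemma nat_bound (n : ℕ) : 2 ^ n * (n.factorial * n.factorial) ≤ (2 * n).factorial := by
  induction n with
  | zero => simp
  | succ n ih =>
    have h2 : 2 * (n + 1) = (2 * n + 1) + 1 := by ring
    rw [h2, Nat.factorial_succ, Nat.factorial_succ, Nat.factorial_succ]
    calc 2 ^ (n + 1) * ((n + 1) * n.factorial * ((n + 1) * n.factorial))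
        = (2 * (n+1)) * (n+1) * (2 ^ n * (n.factorial * n.factorial)) := by ring
      _ ≤ (2 * (n+1)) * (n+1) * (2*n).factorial := by
          exact Nat.mul_le_mul_left _ ih
      _ ≤ (2 * n + 1 + 1) * ((2 * n + 1) * (2 * n).factorial) := by
          have : (n+1) ≤ 2*n+1 := by omega
          calc (2 * (n+1)) * (n+1) * (2*n).factorial
              = (2 * n + 1 + 1) * ((n + 1) * (2 * n).factorial) := by ring
            _ ≤ (2 * n + 1 + 1) * ((2 * n + 1) * (2 * n).factorial) :=
                Nat.mul_le_mul_left _ (Nat.mul_le_mul_right _ this)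

lemma dc_deriv_bound (n : ℕ) : dc n * (2 * (n : ℝ) + 1) ≤ 2 ^ n / n.factorial := by
  unfold dc
  have h1 : ((2 * n + 1).factorial : ℝ) = (2 * (n:ℝ) + 1) * (2 * n).factorial := by
    rw [Nat.factorial_succ]; push_cast; ring
  have h2 : (0:ℝ) < (2 * n).factorial := by exact_mod_cast (2 * n).factorial_pos
  have h3 : (0:ℝ) < n.factorial := by exact_mod_cast n.factorial_pos
  have h4 : (0:ℝ) < 2 * (n:ℝ) + 1 := by positivity
  rw [h1]
  have e : (4:ℝ) ^ n * (n.factorial : ℝ) / ((2 * (n:ℝ) + 1) * ((2 * n).factorial : ℝ))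
      * (2 * (n:ℝ) + 1) = 4 ^ n * (n.factorial : ℝ) / ((2 * n).factorial : ℝ) := by
    field_simp
  rw [e]
  rw [div_le_div_iff₀ h2 h3]
  have h5 : (4:ℝ) ^ n = 2 ^ n * 2 ^ n := by rw [← mul_pow]; norm_num
  rw [h5]
  have hb : ((2:ℝ) ^ n * ((n.factorial : ℝ) * (n.factorial : ℝ)))
      ≤ ((2 * n).factorial : ℝ) := by exact_mod_cast nat_bound n
  calc 2 ^ n * 2 ^ n * (n.factorial : ℝ) * (n.factorial : ℝ)
      = 2 ^ n * ((2:ℝ) ^ n * ((n.factorial : ℝ) * (n.factorial : ℝ))) := by ring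
    _ ≤ 2 ^ n * ((2 * n).factorial : ℝ) :=
        mul_le_mul_of_nonneg_left hb (by positivity)

lemma dc_le (n : ℕ) : dc n ≤ 2 ^ n / n.factorial := by
  have h := dc_deriv_bound n
  have h2 : dc n ≤ dc n * (2 * (n:ℝ) + 1) := by
    nlinarith [dc_pos n, Nat.cast_nonneg (α := ℝ) n]
  linarith

lemma summable_dc_pow {r : ℝ} (hr : 0 ≤ r) : Summable (fun n : ℕ => dc n * r ^ n) := by
  refine Summable.of_nonneg_of_le (fun n => mul_nonneg (dc_pos n).le (pow_nonneg hr n)) (fun n => ?_)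
    (Real.summable_pow_div_factorial (2 * r))
  calc dc n * r ^ n ≤ (2 ^ n / n.factorial) * r ^ n :=
        mul_le_mul_of_nonneg_right (dc_le n) (by positivity)
    _ = (2 * r) ^ n / n.factorial := by rw [mul_pow]; ring

lemma summable_dc_deriv {r : ℝ} (hr : 0 ≤ r) :
    Summable (fun n : ℕ => dc n * (2 * (n:ℝ) + 1) * r ^ (2 * n)) := by
  refine Summable.of_nonneg_of_le
    (fun n => by
      have := dc_pos n
      have h4 : (0:ℝ) ≤ 2 * (n:ℝ) + 1 := by positivity
      positivity)
    (fun n => ?_) (Real.summable_pow_div_factorial (2 * r ^ 2))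
  calc dc n * (2 * (n:ℝ) + 1) * r ^ (2 * n)
      ≤ (2 ^ n / n.factorial) * r ^ (2 * n) :=
        mul_le_mul_of_nonneg_right (dc_deriv_bound n) (by positivity)
    _ = (2 * r ^ 2) ^ n / n.factorial := by
        rw [mul_pow, pow_mul]; ring

noncomputable def Qf (z : ℝ) : ℝ := ∑' n : ℕ, dc n * z ^ (2 * n + 1)

lemma summable_Qf (z : ℝ) : Summable (fun n : ℕ => dc n * z ^ (2 * n + 1)) := by
  have h : ∀ n : ℕ, dc n * z ^ (2 * n + 1) = (dc n * (z ^ 2) ^ n) * z := by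
    intro n; rw [pow_succ, pow_mul]; ring
  simp_rw [h]
  exact (summable_dc_pow (by positivity)).mul_right z

lemma Qf_hasDerivAt (s : ℝ) :
    HasDerivAt Qf (1 + 2 * s * Qf s) s := by
  set R : ℝ := |s| + 1 with hR
  have hR0 : 0 < R := by positivity
  have key : HasDerivAt Qf (∑' n : ℕ, dc n * ((2 * (n:ℝ) + 1) * s ^ (2 * n))) s := by
    refine hasDerivAt_tsum_of_isPreconnected
      (u := fun n : ℕ => dc n * (2 * (n:ℝ) + 1) * R ^ (2 * n))
      (g := fun n z => dc n * z ^ (2 * n + 1))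
      (g' := fun n z => dc n * ((2 * (n:ℝ) + 1) * z ^ (2 * n))) (y₀ := 0)
      (summable_dc_deriv hR0.le) (Metric.isOpen_ball) ((convex_ball (0:ℝ) R).isPreconnected)
      (fun n z _ => ?_) (fun n z hz => ?_) ?_ ?_ ?_
    · have h := hasDerivAt_pow (2 * n + 1) z
      have h2 := h.const_mul (dc n)
      simpa [Nat.add_sub_cancel, mul_comm, mul_assoc, mul_left_comm] using h2
    · rw [Real.norm_eq_abs, abs_mul, abs_mul, abs_pow]
      rw [abs_of_pos (dc_pos n), abs_of_pos (by positivity : (0:ℝ) < 2 * (n:ℝ) + 1)]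
      have hzR : |z| ≤ R := by
        have := Metric.mem_ball.mp hz
        rw [Real.dist_eq, sub_zero] at this
        linarith
      calc dc n * ((2 * (n:ℝ) + 1) * |z| ^ (2 * n))
          ≤ dc n * ((2 * (n:ℝ) + 1) * R ^ (2 * n)) :=
            mul_le_mul_of_nonneg_left (mul_le_mul_of_nonneg_left
              (pow_le_pow_left₀ (abs_nonneg z) hzR _) (by positivity)) (dc_pos n).le
        _ = dc n * (2 * (n:ℝ) + 1) * R ^ (2 * n) := by ring
    · exact Metric.mem_ball_self hR0
    · refine Summable.of_nonneg_of_le (fun n => ?_) (fun n => ?_) summable_zero <;> simp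
    · rw [Metric.mem_ball, Real.dist_eq, sub_zero]
      linarith [abs_nonneg s]
  have habs : ∀ n : ℕ, |s| ^ (2 * n) = s ^ (2 * n) := fun n => by
    rw [pow_mul, pow_mul, sq_abs]
  have hsum : Summable (fun n : ℕ => dc n * ((2 * (n:ℝ) + 1) * s ^ (2 * n))) :=
    (summable_dc_deriv (abs_nonneg s)).congr (fun n => by rw [habs n]; ring)
  have hstep : ∀ n : ℕ, dc (n + 1) * ((2 * ((n+1:ℕ):ℝ) + 1) * s ^ (2 * (n + 1)))
      = 2 * s * (dc n * s ^ (2 * n + 1)) := by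
    intro n
    have h1 : (2 * ((n+1:ℕ):ℝ) + 1) = 2 * (n:ℝ) + 3 := by push_cast; ring
    have h2 : s ^ (2 * (n + 1)) = s ^ (2 * n + 1) * s := by
      rw [show 2 * (n + 1) = (2 * n + 1) + 1 by ring, pow_succ]
    rw [h1, h2, show dc (n+1) * ((2*(n:ℝ)+3) * (s^(2*n+1)*s))
      = (dc (n+1) * (2*(n:ℝ)+3)) * (s^(2*n+1)*s) by ring, dc_rec n]
    ring
  have heq : (∑' n : ℕ, dc n * ((2 * (n:ℝ) + 1) * s ^ (2 * n))) = 1 + 2 * s * Qf s := by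
    rw [Summable.tsum_eq_zero_add hsum]
    simp only [hstep]
    rw [tsum_mul_left]
    norm_num [dc_zero, Qf]
  rw [heq] at key
  exact key

lemma gauss_int_hasDerivAt (b : ℝ) :
    HasDerivAt (fun s : ℝ => ∫ u in (0:ℝ)..s, Real.exp (-u ^ 2)) (Real.exp (-b ^ 2)) b := by
  have hc : Continuous fun u : ℝ => Real.exp (-u ^ 2) := by continuity
  exact intervalIntegral.integral_hasDerivAt_right (hc.intervalIntegrable 0 b)
    (hc.stronglyMeasurableAtFilter _ _) hc.continuousAt

lemma dawson_eq (s : ℝ) :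
    ∫ u in (0:ℝ)..s, Real.exp (-u ^ 2) = Real.exp (-s ^ 2) * Qf s := by
  have hW : ∀ z : ℝ, HasDerivAt
      (fun z : ℝ => Real.exp (-z ^ 2) * Qf z - ∫ u in (0:ℝ)..z, Real.exp (-u ^ 2)) 0 z := by
    intro z
    have h1 : HasDerivAt (fun z : ℝ => Real.exp (-z ^ 2)) (Real.exp (-z ^ 2) * (-(2 * z))) z := by
      have hp : HasDerivAt (fun z : ℝ => -z ^ 2) (-(2 * z)) z := by
        simpa using (hasDerivAt_pow 2 z).fun_neg
      exact hp.exp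
    have h2 := Qf_hasDerivAt z
    have h3 := gauss_int_hasDerivAt z
    have h := (h1.mul h2).sub h3
    convert h using 1
    · rfl
    · rfl
    · rfl
    ring
  have hconst : ∀ z : ℝ, (Real.exp (-z ^ 2) * Qf z - ∫ u in (0:ℝ)..z, Real.exp (-u ^ 2))
      = (Real.exp (-(0:ℝ) ^ 2) * Qf 0 - ∫ u in (0:ℝ)..(0:ℝ), Real.exp (-u ^ 2)) :=
    fun z => is_const_of_deriv_eq_zero
      (fun w => (hW w).differentiableAt) (fun w => (hW w).deriv) z 0
  have hQ0 : Qf 0 = 0 := by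
    unfold Qf
    have : ∀ n : ℕ, dc n * (0:ℝ) ^ (2 * n + 1) = 0 := fun n => by simp
    simp [this]
  have h := hconst s
  rw [intervalIntegral.integral_same, hQ0] at h
  simp only [mul_zero, sub_zero] at h
  linarith

lemma erf_sqrt_eq {z : ℝ} (hz : 0 ≤ z) :
    erf (Real.sqrt z)
      = 2 / Real.sqrt Real.pi * (Real.exp (-z) * (Real.sqrt z * ∑' n : ℕ, dc n * z ^ n)) := by
  rw [erf, dawson_eq, Real.sq_sqrt hz]
  congr 1
  rw [Qf]
  have h : ∀ n : ℕ, dc n * Real.sqrt z ^ (2 * n + 1) = Real.sqrt z * (dc n * z ^ n) := by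
    intro n
    rw [pow_succ, pow_mul, Real.sq_sqrt hz]
    ring
  rw [tsum_congr h, tsum_mul_left]

lemma eq_on_Ici_aux {f g d : ℝ → ℝ} (hf : Continuous f) (hg : Continuous g) (h0 : f 0 = g 0)
    (hfd : ∀ t : ℝ, 0 < t → HasDerivAt f (d t) t)
    (hgd : ∀ t : ℝ, 0 < t → HasDerivAt g (d t) t)
    {y : ℝ} (hy : 0 ≤ y) : f y = g y := by
  rcases eq_or_lt_of_le hy with h | h
  · rw [← h, h0]
  have key : ∀ ε ∈ Ioc (0:ℝ) y, f y = g y + (f ε - g ε) := by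
    intro ε hε
    have := eq_of_has_deriv_right_eq (f' := d) (a := ε) (b := y)
      (f := f) (g := fun t => g t + (f ε - g ε))
      (fun t ht => (hfd t (lt_of_lt_of_le hε.1 ht.1)).hasDerivWithinAt)
      (fun t ht => ((hgd t (lt_of_lt_of_le hε.1 ht.1)).add_const _).hasDerivWithinAt)
      (hf.continuousOn) ((hg.add continuous_const).continuousOn) (by ring)
    exact this y (right_mem_Icc.mpr hε.2)
  have h2 : Tendsto (fun ε => g y + (f ε - g ε)) (𝓝[>] (0:ℝ)) (𝓝 (g y)) := by
    have : Tendsto (fun ε => g y + (f ε - g ε)) (𝓝 (0:ℝ)) (𝓝 (g y + (f 0 - g 0))) :=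
      tendsto_const_nhds.add ((hf.tendsto 0).sub (hg.tendsto 0))
    rw [h0] at this
    simp only [sub_self, add_zero] at this
    exact this.mono_left nhdsWithin_le_nhds
  have hev : ∀ᶠ ε in 𝓝[>] (0:ℝ), g y + (f ε - g ε) = f y := by
    filter_upwards [Ioc_mem_nhdsGT h] with ε hε
    exact (key ε hε).symm
  have h3 : Tendsto (fun _ : ℝ => f y) (𝓝[>] (0:ℝ)) (𝓝 (g y)) :=
    h2.congr' (by filter_upwards [hev] with ε hε using hε)
  exact tendsto_nhds_unique tendsto_const_nhds h3

lemma lowerGamma_half_intInt (a b : ℝ) :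
    IntervalIntegrable (fun t : ℝ => t ^ ((1/2:ℝ) - 1) * Real.exp (-t)) volume a b :=
  (intervalIntegral.intervalIntegrable_rpow' (by norm_num)).mul_continuousOn
    (Continuous.continuousOn (by continuity))

lemma lowerGamma_half {y : ℝ} (hy : 0 ≤ y) :
    lowerGamma (1/2) y = 2 * ∫ u in (0:ℝ)..Real.sqrt y, Real.exp (-u ^ 2) := by
  have hcont : Continuous (fun w : ℝ => lowerGamma (1/2) w) :=
    intervalIntegral.continuous_primitive (fun a b => lowerGamma_half_intInt a b) 0
  have hIcont : Continuous (fun s : ℝ => ∫ u in (0:ℝ)..s, Real.exp (-u ^ 2)) :=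
    intervalIntegral.continuous_primitive
      (fun a b => Continuous.intervalIntegrable (by continuity) a b) 0
  have hgcont : Continuous (fun w : ℝ => 2 * ∫ u in (0:ℝ)..Real.sqrt w, Real.exp (-u ^ 2)) :=
    continuous_const.mul (hIcont.comp Real.continuous_sqrt)
  refine eq_on_Ici_aux (d := fun t => t ^ ((1/2:ℝ) - 1) * Real.exp (-t))
    hcont hgcont ?_ ?_ ?_ hy
  · simp [lowerGamma, intervalIntegral.integral_same, Real.sqrt_zero]
  · intro t ht
    have hmeas : StronglyMeasurableAtFilter
        (fun t : ℝ => t ^ ((1/2:ℝ) - 1) * Real.exp (-t)) (𝓝 t) volume := by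
      have hco : ContinuousOn (fun t : ℝ => t ^ ((1/2:ℝ) - 1) * Real.exp (-t)) (Ioi 0) := by
        refine ContinuousOn.mul ?_ (Continuous.continuousOn (by continuity))
        exact continuousOn_id.rpow_const (fun w hw => Or.inl (ne_of_gt hw))
      exact hco.stronglyMeasurableAtFilter isOpen_Ioi t ht
    have hca : ContinuousAt (fun t : ℝ => t ^ ((1/2:ℝ) - 1) * Real.exp (-t)) t := by
      refine ContinuousAt.mul ?_ (Continuous.continuousAt (by continuity))
      exact Real.continuousAt_rpow_const t _ (Or.inl (ne_of_gt ht))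
    exact intervalIntegral.integral_hasDerivAt_right (lowerGamma_half_intInt 0 t) hmeas hca
  · intro t ht
    have hst : Real.sqrt t ≠ 0 := ne_of_gt (Real.sqrt_pos.mpr ht)
    have hI := gauss_int_hasDerivAt (Real.sqrt t)
    have hsq := Real.hasDerivAt_sqrt (ne_of_gt ht)
    have h := (hI.comp t hsq).const_mul 2
    convert h using 1
    · rfl
    · rfl
    · rfl
    rw [Real.sq_sqrt ht.le]
    have hrp : t ^ ((1/2:ℝ) - 1) = (Real.sqrt t)⁻¹ := by
      rw [show (1/2:ℝ) - 1 = -(1/2) by norm_num, Real.rpow_neg ht.le, ← Real.sqrt_eq_rpow]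
    show t ^ ((1/2:ℝ) - 1) * Real.exp (-t) = 2 * (Real.exp (-t) * (1 / (2 * Real.sqrt t)))
    rw [hrp]
    field_simp

lemma P_zero {y : ℝ} (hy : 0 ≤ y) :
    lowerGamma (1/2) y / Real.Gamma (1/2) = erf (Real.sqrt y) := by
  rw [lowerGamma_half hy, Real.Gamma_one_half_eq, erf]
  have h : Real.sqrt Real.pi ≠ 0 := ne_of_gt (Real.sqrt_pos.mpr Real.pi_pos)
  field_simp

lemma P_rec {y : ℝ} (hy : 0 < y) (n : ℕ) :
    lowerGamma (((n+1:ℕ):ℝ) + 1/2) y / Real.Gamma (((n+1:ℕ):ℝ) + 1/2)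
      = lowerGamma ((n:ℝ) + 1/2) y / Real.Gamma ((n:ℝ) + 1/2)
        - y ^ ((n:ℝ) + 1/2) * Real.exp (-y)
          / (((n:ℝ) + 1/2) * Real.Gamma ((n:ℝ) + 1/2)) := by
  have hc : ((n+1:ℕ):ℝ) + 1/2 = ((n:ℝ) + 1/2) + 1 := by push_cast; ring
  have hpos : (0:ℝ) < (n:ℝ) + 1/2 := by positivity
  rw [hc, lowerGamma_succ hpos hy.le, Real.Gamma_add_one (ne_of_gt hpos)]
  have hG : Real.Gamma ((n:ℝ) + 1/2) ≠ 0 := ne_of_gt (Real.Gamma_pos_of_pos hpos)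
  field_simp

lemma sum_tail {x y : ℝ} (hx0 : 0 < x) (hy : 0 < y) :
    ∑' n : ℕ, x ^ (n+1) * (y ^ ((n:ℝ) + 1/2) * Real.exp (-y)
        / (((n:ℝ) + 1/2) * Real.Gamma ((n:ℝ) + 1/2)))
      = Real.sqrt x * Real.exp (-y) * Real.exp (x*y) * erf (Real.sqrt (x*y)) := by
  have hxy : 0 < x * y := mul_pos hx0 hy
  have hpi : Real.sqrt Real.pi ≠ 0 := ne_of_gt (Real.sqrt_pos.mpr Real.pi_pos)
  set C : ℝ := 2 / Real.sqrt Real.pi * Real.exp (-y) * x * Real.sqrt y with hC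
  have hterm : ∀ n : ℕ, x ^ (n+1) * (y ^ ((n:ℝ) + 1/2) * Real.exp (-y)
      / (((n:ℝ) + 1/2) * Real.Gamma ((n:ℝ) + 1/2))) = C * (dc n * (x*y) ^ n) := by
    intro n
    have hpos : (0:ℝ) < (n:ℝ) + 1/2 := by positivity
    have hyr : y ^ ((n:ℝ) + 1/2) = y ^ (n:ℕ) * Real.sqrt y := by
      rw [Real.rpow_add hy, Real.rpow_natCast, Real.sqrt_eq_rpow]
    rw [hyr, Gamma_nat_half n]
    unfold dc
    rw [Nat.factorial_succ]
    have h1 : ((2*n).factorial : ℝ) ≠ 0 := Nat.cast_ne_zero.mpr (Nat.factorial_ne_zero _)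
    have h2 : ((n.factorial : ℝ)) ≠ 0 := Nat.cast_ne_zero.mpr n.factorial_ne_zero
    have h3 : (4:ℝ) ^ n ≠ 0 := by positivity
    rw [hC]
    push_cast
    rw [mul_pow x y n]
    field_simp
    ring
  rw [tsum_congr hterm, tsum_mul_left, erf_sqrt_eq hxy.le]
  have hsq : Real.sqrt x * Real.sqrt (x*y) = x * Real.sqrt y := by
    rw [← Real.sqrt_mul hx0.le, show x*(x*y) = x^2*y by ring,
      Real.sqrt_mul (by positivity), Real.sqrt_sq hx0.le]
  set S := ∑' n : ℕ, dc n * (x*y) ^ n with hS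
  calc C * S = (x * Real.sqrt y) * 1 * (2 / Real.sqrt Real.pi) * Real.exp (-y) * S := by
        rw [hC]; ring
    _ = (Real.sqrt x * Real.sqrt (x*y)) * (Real.exp (x*y) * Real.exp (-(x*y)))
          * (2 / Real.sqrt Real.pi) * Real.exp (-y) * S := by
        rw [hsq, ← Real.exp_add, add_neg_cancel, Real.exp_zero]
    _ = Real.sqrt x * Real.exp (-y) * Real.exp (x*y)
          * (2 / Real.sqrt Real.pi * (Real.exp (-(x*y)) * (Real.sqrt (x*y) * S))) := by
        ring

theorem tsum_lowerGamma (x y : ℝ) (hx0 : 0 < x) (hx1 : x < 1) (hy : 0 ≤ y) :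
    Summable (fun n : ℕ =>
        |x ^ n * lowerGamma ((n : ℝ) + 1 / 2) y / Real.Gamma ((n : ℝ) + 1 / 2)|) ∧
    ∑' n : ℕ, x ^ n * lowerGamma ((n : ℝ) + 1 / 2) y / Real.Gamma ((n : ℝ) + 1 / 2) =
      (erf (Real.sqrt y) -
        Real.sqrt x * Real.exp (-y) * Real.exp (x * y) * erf (Real.sqrt (x * y))) / (1 - x) := by
  rcases eq_or_lt_of_le hy with hy0 | hy0
  · -- y = 0
    subst hy0
    have hL0 : ∀ s : ℝ, lowerGamma s 0 = 0 := fun s => intervalIntegral.integral_same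
    constructor
    · have h : (fun n : ℕ =>
          |x ^ n * lowerGamma ((n : ℝ) + 1 / 2) 0 / Real.Gamma ((n : ℝ) + 1 / 2)|)
          = fun _ : ℕ => (0:ℝ) := funext fun n => by simp [hL0]
      rw [h]; exact summable_zero
    · have h : ∀ n : ℕ,
          x ^ n * lowerGamma ((n : ℝ) + 1 / 2) 0 / Real.Gamma ((n : ℝ) + 1 / 2) = 0 :=
        fun n => by simp [hL0]
      rw [tsum_congr h, tsum_zero]
      rw [Real.sqrt_zero, mul_zero, Real.sqrt_zero]
      simp [erf]
  · -- y > 0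
    have hGpos : ∀ n : ℕ, 0 < Real.Gamma ((n:ℝ) + 1/2) :=
      fun n => Real.Gamma_pos_of_pos (by positivity)
    have hL0 : ∀ n : ℕ, 0 ≤ lowerGamma ((n:ℝ) + 1/2) y := fun n => lowerGamma_nonneg hy
    have hLle : ∀ n : ℕ, lowerGamma ((n:ℝ) + 1/2) y ≤ Real.Gamma ((n:ℝ) + 1/2) :=
      fun n => lowerGamma_le_Gamma (by positivity) hy
    have hP1 : ∀ n : ℕ, lowerGamma ((n:ℝ) + 1/2) y / Real.Gamma ((n:ℝ) + 1/2) ≤ 1 :=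
      fun n => (div_le_one (hGpos n)).mpr (hLle n)
    have hP0 : ∀ n : ℕ, 0 ≤ lowerGamma ((n:ℝ) + 1/2) y / Real.Gamma ((n:ℝ) + 1/2) :=
      fun n => div_nonneg (hL0 n) (hGpos n).le
    have habs : Summable (fun n : ℕ =>
        |x ^ n * lowerGamma ((n : ℝ) + 1 / 2) y / Real.Gamma ((n : ℝ) + 1 / 2)|) := by
      refine Summable.of_nonneg_of_le (fun n => abs_nonneg _) (fun n => ?_)
        (summable_geometric_of_lt_one hx0.le hx1)
      rw [mul_div_assoc,
        abs_of_nonneg (mul_nonneg (pow_nonneg hx0.le n) (hP0 n))]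
      calc x ^ n * (lowerGamma ((n:ℝ) + 1/2) y / Real.Gamma ((n:ℝ) + 1/2))
          ≤ x ^ n * 1 := mul_le_mul_of_nonneg_left (hP1 n) (pow_nonneg hx0.le n)
        _ = x ^ n := mul_one _
    refine ⟨habs, ?_⟩
    have hS : Summable (fun n : ℕ =>
        x ^ n * (lowerGamma ((n:ℝ) + 1/2) y / Real.Gamma ((n:ℝ) + 1/2))) := by
      have := habs.of_abs
      exact this.congr (fun n => (mul_div_assoc _ _ _))
    have hS1 : Summable (fun n : ℕ =>
        x ^ (n+1) * (lowerGamma ((n:ℝ) + 1/2) y / Real.Gamma ((n:ℝ) + 1/2))) := by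
      have := hS.mul_left x
      exact this.congr (fun n => by rw [← mul_assoc, ← pow_succ'])
    have hS2 : Summable (fun n : ℕ =>
        x ^ (n+1) * (lowerGamma (((n+1:ℕ):ℝ) + 1/2) y / Real.Gamma (((n+1:ℕ):ℝ) + 1/2))) :=
      (summable_nat_add_iff 1).mpr hS
    -- the shifted sum identity
    have hzero : (((0:ℕ):ℝ) + 1/2) = (1/2 : ℝ) := by norm_num
    have hsplit : ∑' n : ℕ, x ^ n * (lowerGamma ((n:ℝ) + 1/2) y / Real.Gamma ((n:ℝ) + 1/2))
        = lowerGamma (1/2) y / Real.Gamma (1/2)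
          + ∑' n : ℕ, x ^ (n+1)
              * (lowerGamma (((n+1:ℕ):ℝ) + 1/2) y / Real.Gamma (((n+1:ℕ):ℝ) + 1/2)) := by
      rw [Summable.tsum_eq_zero_add hS]
      norm_num
    have hxS : x * ∑' n : ℕ, x ^ n * (lowerGamma ((n:ℝ) + 1/2) y / Real.Gamma ((n:ℝ) + 1/2))
        = ∑' n : ℕ, x ^ (n+1) * (lowerGamma ((n:ℝ) + 1/2) y / Real.Gamma ((n:ℝ) + 1/2)) := by
      rw [← tsum_mul_left]
      exact tsum_congr (fun n => by rw [← mul_assoc, ← pow_succ'])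
    have hdiff : (∑' n : ℕ, x ^ (n+1)
            * (lowerGamma (((n+1:ℕ):ℝ) + 1/2) y / Real.Gamma (((n+1:ℕ):ℝ) + 1/2)))
          - (∑' n : ℕ, x ^ (n+1)
            * (lowerGamma ((n:ℝ) + 1/2) y / Real.Gamma ((n:ℝ) + 1/2)))
        = - ∑' n : ℕ, x ^ (n+1) * (y ^ ((n:ℝ) + 1/2) * Real.exp (-y)
            / (((n:ℝ) + 1/2) * Real.Gamma ((n:ℝ) + 1/2))) := by
      rw [← Summable.tsum_sub hS2 hS1, ← tsum_neg]
      refine tsum_congr (fun n => ?_)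
      rw [P_rec hy0 n]
      ring
    set S := ∑' n : ℕ, x ^ n * (lowerGamma ((n:ℝ) + 1/2) y / Real.Gamma ((n:ℝ) + 1/2))
      with hSdef
    have hkey : (1 - x) * S
        = erf (Real.sqrt y)
          - Real.sqrt x * Real.exp (-y) * Real.exp (x * y) * erf (Real.sqrt (x * y)) := by
      have e1 : (1 - x) * S = S - x * S := by ring
      rw [e1, hxS, hsplit, add_sub_assoc, hdiff, sum_tail hx0 hy0, P_zero hy]
      ring
    have hne : (1 - x) ≠ 0 := by linarith
    have hfinal : S = (erf (Real.sqrt y)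
        - Real.sqrt x * Real.exp (-y) * Real.exp (x * y) * erf (Real.sqrt (x * y))) / (1 - x) := by
      rw [eq_div_iff hne]
      linarith [hkey]
    rw [← hfinal, hSdef]
    exact tsum_congr (fun n => (mul_div_assoc _ _ _))
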